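/- Let q be a real number with q > 0 and q ≠ 1, and let D : W^q → W^q be a homogeneous α¹-derivation of degree s ∈ ℤ, i.e. D is linear, α∘D = D∘α, D([x,y]) = [D(x),α(y)] + (−1)^{|x||D|}[α(x),D(y)] for all homogeneous x,y, and D maps span{L_n, G_n} into span{L_{n+s}, G_{n+s}} for every n ∈ ℤ. Then D = 0. -/

import Mathlib

/-- The `q`-number `{n} = (1 - qⁿ)/(1 - q)`. -/
noncomputable def qInt (q : ℂ) (n : ℤ) : ℂ := (1 - q ^ n) / (1 - q)

/-- The grading of the `q`-deformed Witt superalgebra: even part spanned by the `L n`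
(`= b (Sum.inl n)`), odd part spanned by the `G n` (`= b (Sum.inr n)`). -/
def wGr {W : Type*} [AddCommGroup W] [Module ℂ W] (b : Module.Basis (ℤ ⊕ ℤ) ℂ W) :
    ZMod 2 → Submodule ℂ W :=
  fun i => if i = 0 then Submodule.span ℂ (Set.range fun n : ℤ => b (Sum.inl n))
           else Submodule.span ℂ (Set.range fun n : ℤ => b (Sum.inr n))

lemma qpow_inj (q : ℝ) (hq0 : 0 < q) (hq1 : q ≠ 1) :
    ∀ m n : ℤ, (q:ℂ)^m = (q:ℂ)^n → m = n := by
  intro m n h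
  have hr : (q:ℝ)^m = (q:ℝ)^n := by exact_mod_cast h
  have hlog : Real.log q ≠ 0 := by
    intro h0
    rcases Real.log_eq_zero.mp h0 with h' | h' | h' <;> first | linarith | exact hq1 h'
  have h2 := congrArg Real.log hr
  rw [Real.log_zpow, Real.log_zpow] at h2
  have : (m:ℝ) = n := mul_right_cancel₀ hlog h2
  exact_mod_cast this

lemma lemR (q : ℝ) (hq0 : 0 < q) (f : ℤ → ℂ)
    (h : ∀ n m : ℤ, m ≠ n → f (n+m) = f n * (1+(q:ℂ)^m) + f m * (1+(q:ℂ)^n)) :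
    ∀ n, f n = 0 := by
  have hqC : (q:ℂ) ≠ 0 := by
    simp only [ne_eq, Complex.ofReal_eq_zero]; intro h'; linarith
  have h0 : ∀ m : ℤ, m ≠ 0 → f m = - (f 0 * (1+(q:ℂ)^m)) := by
    intro m hm
    have := h 0 m hm
    rw [zero_add, zpow_zero] at this
    linear_combination -this
  have hf0 : f 0 = 0 := by
    have h3 := h 1 2 (by decide)
    rw [show (1+2:ℤ) = 3 from by norm_num] at h3
    rw [h0 1 (by decide), h0 2 (by decide), h0 3 (by decide)] at h3
    have hK : f 0 * ((1+(q:ℂ)^(1:ℤ))*(1+(q:ℂ)^(2:ℤ))*2 - (1+(q:ℂ)^(3:ℤ))) = 0 := by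
      linear_combination h3
    have hfac : ((1+(q:ℂ)^(1:ℤ))*(1+(q:ℂ)^(2:ℤ))*2 - (1+(q:ℂ)^(3:ℤ))) ≠ 0 := by
      have e1 : (q:ℂ)^(1:ℤ) = ((q:ℝ):ℂ) := by rw [zpow_one]
      have e2 : (q:ℂ)^(2:ℤ) = (((q*q:ℝ)):ℂ) := by push_cast; rw [show (2:ℤ)=1+1 from rfl, zpow_add₀ hqC, zpow_one]
      have e3 : (q:ℂ)^(3:ℤ) = (((q*q*q:ℝ)):ℂ) := by push_cast; rw [show (3:ℤ)=1+1+1 from rfl, zpow_add₀ hqC, zpow_add₀ hqC, zpow_one]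
      rw [e1, e2, e3]
      intro hc
      have : ((1+q)*(1+q*q)*2 - (1+q*q*q) : ℝ) = 0 := by exact_mod_cast hc
      nlinarith [sq_nonneg q, mul_pos hq0 hq0]
    exact (mul_eq_zero.mp hK).resolve_right hfac
  intro n
  by_cases hn : n = 0
  · rw [hn, hf0]
  · rw [h0 n hn, hf0]; ring

lemma lemS (q : ℝ) (g : ℤ → ℂ)
    (h : ∀ n m : ℤ, n ≠ m+1 → g (n+m) = (1+(q:ℂ)^n) * g m) :
    ∀ n, g n = 0 := by
  have hz : ∀ m : ℤ, m ≠ -1 → g m = 0 := by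
    intro m hm
    have := h 0 m (by omega)
    rw [zero_add, zpow_zero] at this
    linear_combination -this
  intro n
  by_cases hn : n = -1
  · subst hn
    have h1 := h 1 (-2) (by decide)
    rw [show (1 + -2 : ℤ) = -1 from by norm_num, hz (-2) (by decide)] at h1
    simpa using h1
  · exact hz n hn


/-- For real `q > 0`, `q ≠ 1`: every homogeneous `α¹`-derivation of the
`q`-deformed Witt superalgebra `W^q` of degree `s` is zero. -/
theorem qWitt_alpha1_derivation_eq_zero
    (q : ℝ) (hq0 : 0 < q) (hq1 : q ≠ 1)
    (W : Type*) [AddCommGroup W] [Module ℂ W] (b : Module.Basis (ℤ ⊕ ℤ) ℂ W)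
    (br : W → W → W)
    (hbr1 : ∀ x, IsLinearMap ℂ (br x)) (hbr2 : ∀ y, IsLinearMap ℂ fun x => br x y)
    (α : W → W) (hα : IsLinearMap ℂ α)
    (hLL : ∀ n m : ℤ, br (b (Sum.inl n)) (b (Sum.inl m)) =
        (qInt q m - qInt q n) • b (Sum.inl (n + m)))
    (hLG : ∀ n m : ℤ, br (b (Sum.inl n)) (b (Sum.inr m)) =
        (qInt q (m + 1) - qInt q n) • b (Sum.inr (n + m)))
    (hGL : ∀ n m : ℤ, br (b (Sum.inr m)) (b (Sum.inl n)) =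
        -((qInt q (m + 1) - qInt q n) • b (Sum.inr (n + m))))
    (hGG : ∀ n m : ℤ, br (b (Sum.inr n)) (b (Sum.inr m)) = 0)
    (hαL : ∀ n : ℤ, α (b (Sum.inl n)) = (1 + (q : ℂ) ^ n) • b (Sum.inl n))
    (hαG : ∀ n : ℤ, α (b (Sum.inr n)) = (1 + (q : ℂ) ^ (n + 1)) • b (Sum.inr n))
    -- D is a homogeneous α¹-derivation of parity p and degree s
    (D : W → W) (p : ZMod 2) (s : ℤ)
    (hD : IsLinearMap ℂ D)
    (hcomm : ∀ x, α (D x) = D (α x))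
    (hpar : ∀ i : ZMod 2, ∀ x ∈ wGr b i, D x ∈ wGr b (i + p))
    (hdegL : ∀ n : ℤ, D (b (Sum.inl n)) ∈
        Submodule.span ℂ {b (Sum.inl (n + s)), b (Sum.inr (n + s))})
    (hdegG : ∀ n : ℤ, D (b (Sum.inr n)) ∈
        Submodule.span ℂ {b (Sum.inl (n + s)), b (Sum.inr (n + s))})
    (hleib : ∀ (i j : ZMod 2), ∀ x ∈ wGr b i, ∀ y ∈ wGr b j,
        D (br x y) = br (D x) (α y) + ((-1 : ℂ) ^ (i.val * p.val)) • br (α x) (D y)) :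
    ∀ x : W, D x = 0 := by
  classical
  have hqC0 : (q:ℂ) ≠ 0 := by simp only [ne_eq, Complex.ofReal_eq_zero]; intro h; linarith
  have hq1C : (q:ℂ) ≠ 1 := by exact_mod_cast hq1
  have hqne : ∀ m n : ℤ, m ≠ n → (q:ℂ)^m ≠ (q:ℂ)^n :=
    fun m n hmn h => hmn (qpow_inj q hq0 hq1 m n h)
  have hsub : ∀ m n : ℤ, m ≠ n → qInt q m - qInt q n ≠ 0 := by
    intro m n hmn h
    apply hqne m n hmn
    have h1q : (1:ℂ) - q ≠ 0 := sub_ne_zero.mpr (Ne.symm hq1C)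
    unfold qInt at h
    field_simp at h
    linear_combination -h
  have memL : ∀ n : ℤ, b (Sum.inl n) ∈ wGr b 0 := by
    intro n; unfold wGr; rw [if_pos rfl]; exact Submodule.subset_span ⟨n, rfl⟩
  have memG : ∀ n : ℤ, b (Sum.inr n) ∈ wGr b 1 := by
    intro n; unfold wGr; rw [if_neg (by decide)]; exact Submodule.subset_span ⟨n, rfl⟩
  have pair : ∀ (k : ℤ) (x y x' y' : ℂ),
      x • b (Sum.inl k) + y • b (Sum.inr k) = x' • b (Sum.inl k) + y' • b (Sum.inr k) →
      x = x' ∧ y = y' := by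
    intro k x y x' y' h
    constructor
    · have := congrArg (fun w => b.repr w (Sum.inl k)) h
      simpa [Finsupp.single_apply] using this
    · have := congrArg (fun w => b.repr w (Sum.inr k)) h
      simpa [Finsupp.single_apply] using this
  -- bracket linearity helpers
  have brL : ∀ (u : ℂ) (x y : W), br (u • x) y = u • br x y := fun u x y => (hbr2 y).map_smul u x
  have brR : ∀ (u : ℂ) (x y : W), br x (u • y) = u • br x y := fun u x y => (hbr1 x).map_smul u y
  have brLa : ∀ x y z : W, br (x + y) z = br x z + br y z := fun x y z => (hbr2 z).map_add x y
  have brRa : ∀ x y z : W, br x (y + z) = br x y + br x z := fun x y z => (hbr1 x).map_add y z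
  have br0L : ∀ y : W, br 0 y = 0 := fun y => (hbr2 y).map_zero
  -- coefficient functions
  have hdegL' : ∀ n : ℤ, ∃ x y : ℂ,
      x • b (Sum.inl (n+s)) + y • b (Sum.inr (n+s)) = D (b (Sum.inl n)) := by
    intro n; have := hdegL n; rwa [Submodule.mem_span_pair] at this
  have hdegG' : ∀ n : ℤ, ∃ x y : ℂ,
      x • b (Sum.inl (n+s)) + y • b (Sum.inr (n+s)) = D (b (Sum.inr n)) := by
    intro n; have := hdegG n; rwa [Submodule.mem_span_pair] at this
  choose a c hDL using hdegL'
  choose d e hDG using hdegG'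
  -- commutation relations
  have hcommL : ∀ n : ℤ, a n * ((q:ℂ)^(n+s) - (q:ℂ)^n) = 0 ∧
      c n * ((q:ℂ)^(n+s+1) - (q:ℂ)^n) = 0 := by
    intro n
    have k := hcomm (b (Sum.inl n))
    rw [hαL n, hD.map_smul, ← hDL n] at k
    simp only [hα.map_add, hα.map_smul, hαL, hαG, smul_add, smul_smul] at k
    obtain ⟨k1, k2⟩ := pair (n+s) _ _ _ _ k
    constructor
    · linear_combination k1
    · linear_combination k2
  have hcommG : ∀ n : ℤ, d n * ((q:ℂ)^(n+s) - (q:ℂ)^(n+1)) = 0 ∧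
      e n * ((q:ℂ)^(n+s+1) - (q:ℂ)^(n+1)) = 0 := by
    intro n
    have k := hcomm (b (Sum.inr n))
    rw [hαG n, hD.map_smul, ← hDG n] at k
    simp only [hα.map_add, hα.map_smul, hαL, hαG, smul_add, smul_smul] at k
    obtain ⟨k1, k2⟩ := pair (n+s) _ _ _ _ k
    constructor
    · linear_combination k1
    · linear_combination k2
  have ha0 : s ≠ 0 → ∀ n, a n = 0 := by
    intro hs n
    rcases mul_eq_zero.mp (hcommL n).1 with h | h
    · exact h
    · exact absurd (sub_eq_zero.mp h) (hqne _ _ (by omega))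
  have hc0 : s ≠ -1 → ∀ n, c n = 0 := by
    intro hs n
    rcases mul_eq_zero.mp (hcommL n).2 with h | h
    · exact h
    · exact absurd (sub_eq_zero.mp h) (hqne _ _ (by omega))
  have hd0 : s ≠ 1 → ∀ n, d n = 0 := by
    intro hs n
    rcases mul_eq_zero.mp (hcommG n).1 with h | h
    · exact h
    · exact absurd (sub_eq_zero.mp h) (hqne _ _ (by omega))
  have he0 : s ≠ 0 → ∀ n, e n = 0 := by
    intro hs n
    rcases mul_eq_zero.mp (hcommG n).2 with h | h
    · exact h
    · exact absurd (sub_eq_zero.mp h) (hqne _ _ (by omega))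
  -- all coefficients vanish
  have hzero : (∀ n, a n = 0) ∧ (∀ n, c n = 0) ∧ (∀ n, d n = 0) ∧ (∀ n, e n = 0) := by
    by_cases hs0 : s = 0
    · subst hs0
      have hc : ∀ n, c n = 0 := hc0 (by decide)
      have hd : ∀ n, d n = 0 := hd0 (by decide)
      simp only [add_zero] at hDL hDG
      have hDL' : ∀ n, D (b (Sum.inl n)) = a n • b (Sum.inl n) := by
        intro n; rw [← hDL n, hc n]; simp
      have hDG' : ∀ n, D (b (Sum.inr n)) = e n • b (Sum.inr n) := by
        intro n; rw [← hDG n, hd n]; simp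
      have hA : ∀ n m : ℤ, m ≠ n → a (n+m) = a n * (1+(q:ℂ)^m) + a m * (1+(q:ℂ)^n) := by
        intro n m hmn
        have key := hleib 0 0 _ (memL n) _ (memL m)
        rw [hLL n m, hD.map_smul, hDL' (n+m), hDL' n, hDL' m, hαL n, hαL m] at key
        simp only [brL, brR, hLL, smul_smul, ZMod.val_zero, zero_mul, pow_zero, one_smul] at key
        have kk := congrArg (fun w => b.repr w (Sum.inl (n+m))) key
        simp [Finsupp.single_apply] at kk
        have hg : (qInt q m - qInt q n) *
            (a (n+m) - (a n * (1+(q:ℂ)^m) + a m * (1+(q:ℂ)^n))) = 0 := by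
          linear_combination kk
        rcases mul_eq_zero.mp hg with h | h
        · exact absurd h (hsub m n hmn)
        · linear_combination h
      have ha : ∀ n, a n = 0 := lemR q hq0 a hA
      have hDL0 : ∀ n, D (b (Sum.inl n)) = 0 := by
        intro n; rw [hDL' n, ha n, zero_smul]
      have hE : ∀ n m : ℤ, n ≠ m+1 → e (n+m) = (1+(q:ℂ)^n) * e m := by
        intro n m hne
        have key := hleib 0 1 _ (memL n) _ (memG m)
        rw [hLG n m, hD.map_smul, hDG' (n+m), hDL0 n, hDG' m, hαL n, hαG m, br0L] at key
        simp only [brL, brR, hLG, smul_smul, ZMod.val_zero, zero_mul, pow_zero, one_smul,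
          zero_add] at key
        have kk := congrArg (fun w => b.repr w (Sum.inr (n+m))) key
        simp [Finsupp.single_apply] at kk
        have hg : (qInt q (m+1) - qInt q n) * (e (n+m) - (1+(q:ℂ)^n) * e m) = 0 := by
          linear_combination kk
        rcases mul_eq_zero.mp hg with h | h
        · exact absurd h (hsub (m+1) n (by omega))
        · linear_combination h
      exact ⟨ha, hc, hd, lemS q e hE⟩
    · by_cases hsm1 : s = -1
      · subst hsm1
        have ha : ∀ n, a n = 0 := ha0 (by decide)
        have hd : ∀ n, d n = 0 := hd0 (by decide)
        have he : ∀ n, e n = 0 := he0 (by decide)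
        have hDL' : ∀ n, D (b (Sum.inl n)) = c n • b (Sum.inr (n + -1)) := by
          intro n; rw [← hDL n, ha n]; simp
        have hC : ∀ n m : ℤ, m ≠ n → c (n+m) = c n * (1+(q:ℂ)^m) + c m * (1+(q:ℂ)^n) := by
          intro n m hmn
          have key := hleib 0 0 _ (memL n) _ (memL m)
          rw [hLL n m, hD.map_smul, hDL' (n+m), hDL' n, hDL' m, hαL n, hαL m] at key
          simp only [brL, brR, hGL, hLG, smul_smul, smul_neg, ZMod.val_zero, zero_mul,
            pow_zero, one_smul] at key
          simp only [show n + -1 + 1 = n from by ring, show m + (n + -1) = n + m + -1 from by ring,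
            show m + -1 + 1 = m from by ring, show n + (m + -1) = n + m + -1 from by ring] at key
          have kk := congrArg (fun w => b.repr w (Sum.inr (n+m+ -1))) key
          simp [Finsupp.single_apply] at kk
          have hg : (qInt q m - qInt q n) *
              (c (n+m) - (c n * (1+(q:ℂ)^m) + c m * (1+(q:ℂ)^n))) = 0 := by
            linear_combination kk
          rcases mul_eq_zero.mp hg with h | h
          · exact absurd h (hsub m n hmn)
          · linear_combination h
        exact ⟨ha, lemR q hq0 c hC, hd, he⟩
      · by_cases hs1 : s = 1
        · subst hs1
          have ha : ∀ n, a n = 0 := ha0 (by decide)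
          have hc : ∀ n, c n = 0 := hc0 (by decide)
          have he : ∀ n, e n = 0 := he0 (by decide)
          have hDL0 : ∀ n, D (b (Sum.inl n)) = 0 := by
            intro n; rw [← hDL n, ha n, hc n]; simp
          have hDG' : ∀ n, D (b (Sum.inr n)) = d n • b (Sum.inl (n + 1)) := by
            intro n; rw [← hDG n, he n]; simp
          have hDk : ∀ n m : ℤ, n ≠ m+1 → d (n+m) = (1+(q:ℂ)^n) * d m := by
            intro n m hne
            have key := hleib 0 1 _ (memL n) _ (memG m)
            rw [hLG n m, hD.map_smul, hDG' (n+m), hDL0 n, hDG' m, hαL n, hαG m, br0L] at key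
            simp only [brL, brR, hLL, smul_smul, ZMod.val_zero, zero_mul, pow_zero, one_smul,
              zero_add] at key
            simp only [show n + (m + 1) = n + m + 1 from by ring] at key
            have kk := congrArg (fun w => b.repr w (Sum.inl (n+m+1))) key
            simp [Finsupp.single_apply] at kk
            have hg : (qInt q (m+1) - qInt q n) * (d (n+m) - (1+(q:ℂ)^n) * d m) = 0 := by
              linear_combination kk
            rcases mul_eq_zero.mp hg with h | h
            · exact absurd h (hsub (m+1) n (by omega))
            · linear_combination h
          exact ⟨ha, hc, lemS q d hDk, he⟩
        · exact ⟨ha0 hs0, hc0 hsm1, hd0 hs1, he0 hs0⟩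
  obtain ⟨ha, hc, hd, he⟩ := hzero
  have hb : ∀ i, D (b i) = 0 := by
    rintro (n | n)
    · rw [← hDL n, ha n, hc n]; simp
    · rw [← hDG n, hd n, he n]; simp
  intro x
  have h0 : hD.mk' D = (0 : W →ₗ[ℂ] W) := b.ext (by intro i; simpa using hb i)
  calc D x = (hD.mk' D) x := rfl
    _ = (0 : W →ₗ[ℂ] W) x := by rw [h0]
    _ = 0 := rfl
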